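/- Let F be a field and let V be an infinite-dimensional vector space over F. Then the Lie algebra End_F(V) of all F-linear endomorphisms of V, with bracket [f,g] = f∘g − g∘f, is perfect: every element of End_F(V) is a finite sum of commutators [f,g], i.e. End_F(V) = [End_F(V), End_F(V)]. -/

import Mathlib

open Finsupp

set_option synthInstance.maxHeartbeats 1000000 in
set_option maxHeartbeats 1000000 in
/-- For a field `F` and an infinite-dimensional vector space `V` over `F`,
the Lie algebra `End_F(V)` with bracket `⁅f,g⁆ = f ∘ g - g ∘ f` is perfect: every
endomorphism is a finite sum of commutators. -/
theorem stmt_0 (F : Type*) [Field F] (V : Type*) [AddCommGroup V] [Module F V]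
    (hV : ¬ Module.Finite F V) :
    AddSubgroup.closure {x : Module.End F V | ∃ f g : Module.End F V, x = ⁅f, g⁆} = ⊤ := by
  classical
  -- the basis of V is infinite
  set ι := Module.Basis.ofVectorSpaceIndex F V with hι
  let bV : Module.Basis ι F V := Module.Basis.ofVectorSpace F V
  have hinf : Infinite ι := by
    rw [← not_finite_iff_infinite]
    intro h
    exact hV (Module.Finite.of_basis bV)
  -- V is isomorphic to ℕ →₀ V
  have hcard : Nonempty ((Σ _ : ℕ, ι) ≃ ι) := by
    refine ⟨(Equiv.sigmaEquivProd ℕ ι).trans ?_⟩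
    refine Classical.choice (Cardinal.eq.mp ?_)
    rw [Cardinal.mk_prod]
    simp [Cardinal.aleph0_mul_mk_eq]
  let σ : (Σ _ : ℕ, ι) ≃ ι := Classical.choice hcard
  let bW : Module.Basis ι F (ℕ →₀ V) := (Finsupp.basis fun _ : ℕ => bV).reindex σ
  let e : (ℕ →₀ V) ≃ₗ[F] V := bW.equiv bV (Equiv.refl ι)
  -- shift operators
  let s : (ℕ →₀ V) →ₗ[F] (ℕ →₀ V) := Finsupp.lmapDomain V F Nat.succ
  let t : (ℕ →₀ V) →ₗ[F] (ℕ →₀ V) := Finsupp.lcomapDomain Nat.succ Nat.succ_injective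
  let i0 : V →ₗ[F] (ℕ →₀ V) := Finsupp.lsingle 0
  let p0 : (ℕ →₀ V) →ₗ[F] V := Finsupp.lapply 0
  have h1 : t ∘ₗ s = LinearMap.id := by
    apply LinearMap.ext; intro f
    ext n
    simp [t, s, Finsupp.lcomapDomain, Finsupp.comapDomain_apply,
      Finsupp.mapDomain_apply Nat.succ_injective]
  have h2 : ∀ a : Module.End F V,
      Finsupp.mapRange.linearMap a - s ∘ₗ Finsupp.mapRange.linearMap a ∘ₗ t
        = i0 ∘ₗ a ∘ₗ p0 := by
    intro a
    apply LinearMap.ext; intro f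
    ext n
    cases n with
    | zero =>
        have h0 : (0 : ℕ) ∉ Set.range Nat.succ := by simp [Nat.succ_ne_zero]
        simp [s, t, i0, p0, Finsupp.mapDomain_notin_range _ _ h0]
    | succ m =>
        simp [s, t, i0, p0, Finsupp.lcomapDomain, Finsupp.comapDomain_apply,
          Finsupp.mapDomain_apply Nat.succ_injective, Finsupp.single_apply,
          (Nat.succ_ne_zero m).symm]
  rw [AddSubgroup.eq_top_iff']
  intro a
  let Φ : Module.End F (ℕ →₀ V) := Finsupp.mapRange.linearMap a
  let j : Module.End F V := e.toLinearMap ∘ₗ i0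
  let q : Module.End F V := p0 ∘ₗ e.symm.toLinearMap
  have hqj : ∀ v, q (j (a v)) = a v := by
    intro v
    simp [q, j, i0, p0]
  have hb : t ∘ₗ (s ∘ₗ Φ) - (s ∘ₗ Φ) ∘ₗ t = i0 ∘ₗ a ∘ₗ p0 := by
    have h3 : t ∘ₗ (s ∘ₗ Φ) = Φ := by
      rw [← LinearMap.comp_assoc, h1, LinearMap.id_comp]
    rw [h3, LinearMap.comp_assoc]
    exact h2 a
  have key : ∀ v, j (a (q v)) = ⁅e.conj t, e.conj (s ∘ₗ Φ)⁆ v := by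
    intro v
    have hbv := LinearMap.ext_iff.mp hb (e.symm v)
    simp only [LinearMap.sub_apply, LinearMap.coe_comp, Function.comp_apply] at hbv
    simp only [Ring.lie_def, LinearMap.sub_apply, Module.End.mul_apply,
      LinearEquiv.conj_apply, LinearMap.coe_comp, LinearEquiv.coe_coe,
      Function.comp_apply, LinearEquiv.symm_apply_apply]
    rw [← map_sub e, hbv]
    simp [j, q, i0, p0]
  have decomp : a = ⁅e.conj t, e.conj (s ∘ₗ Φ)⁆ + ⁅q, j ∘ₗ a⁆ := by
    apply LinearMap.ext; intro v
    rw [LinearMap.add_apply, ← key v]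
    simp only [Ring.lie_def, LinearMap.sub_apply, Module.End.mul_apply,
      LinearMap.coe_comp, Function.comp_apply]
    rw [hqj v]
    abel
  rw [decomp]
  exact add_mem (AddSubgroup.subset_closure ⟨_, _, rfl⟩)
    (AddSubgroup.subset_closure ⟨_, _, rfl⟩)
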